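/- Let X ∈ ℝ^{M×N} with all entries nonnegative, H ∈ ℝ^{K×N} with all entries positive, and S ∈ ℝ^{M×K} with all entries positive. Define the multiplicative update S'_{il} = S_{il} (X Hᵀ)_{il} / (S H Hᵀ)_{il}. Then Σ_{i,j} (X_{ij} − (S'H)_{ij})² ≤ Σ_{i,j} (X_{ij} − (SH)_{ij})², i.e., the NMF objective does not increase under the multiplicative update of S. -/

import Mathlib

open Finset Matrix

/-- Key lemma: `dᵀ A d ≤ Σ_l ((As)_l / s_l) d_l²` for symmetric nonneg `A`, positive `s`. -/
lemma nmf_key {K : ℕ} (A : Fin K → Fin K → ℝ) (hA : ∀ l m, 0 ≤ A l m)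
    (hsym : ∀ l m, A l m = A m l) (s d : Fin K → ℝ) (hs : ∀ l, 0 < s l) :
    ∑ l, ∑ m, d l * d m * A l m ≤ ∑ l, (∑ m, A l m * s m) / s l * (d l) ^ 2 := by
  have hR : ∑ l, (∑ m, A l m * s m) / s l * (d l) ^ 2
      = ∑ l, ∑ m, (A l m * s m / s l * (d l) ^ 2) := by
    refine Finset.sum_congr rfl fun l _ => ?_
    rw [Finset.sum_div, Finset.sum_mul]
  rw [hR, ← sub_nonneg]
  set T : Fin K → Fin K → ℝ := fun l m => A l m * s m / s l * (d l) ^ 2 - d l * d m * A l m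
    with hT
  have hsum : ∑ l, ∑ m, (A l m * s m / s l * (d l) ^ 2)
      - ∑ l, ∑ m, d l * d m * A l m = ∑ l, ∑ m, T l m := by
    rw [← Finset.sum_sub_distrib]
    refine Finset.sum_congr rfl fun l _ => ?_
    rw [← Finset.sum_sub_distrib]
  rw [hsum]
  have hpair : ∀ l m, 0 ≤ T l m + T m l := by
    intro l m
    have hsl : s l ≠ 0 := (hs l).ne'
    have hsm : s m ≠ 0 := (hs m).ne'
    have h1 : T l m + T m l = A l m / (s l * s m) * (s m * d l - s l * d m) ^ 2 := by
      simp only [hT]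
      rw [hsym m l]
      field_simp
      ring
    rw [h1]
    exact mul_nonneg (div_nonneg (hA l m) (mul_pos (hs l) (hs m)).le) (sq_nonneg _)
  have hswap : ∑ l, ∑ m, T l m = ∑ l, ∑ m, T m l := Finset.sum_comm
  have : ∑ l, ∑ m, T l m = (∑ l, ∑ m, (T l m + T m l)) / 2 := by
    simp only [Finset.sum_add_distrib]
    rw [← hswap]; ring
  rw [this]
  have : 0 ≤ ∑ l, ∑ m, (T l m + T m l) :=
    Finset.sum_nonneg fun l _ => Finset.sum_nonneg fun m _ => hpair l m
  linarith

/-- Quadratic expansion of the row objective. -/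
lemma nmf_expand {N K : ℕ} (x : Fin N → ℝ) (H : Fin K → Fin N → ℝ) (t : Fin K → ℝ) :
    ∑ j, (x j - ∑ l, t l * H l j) ^ 2
      = ∑ j, (x j) ^ 2 - 2 * ∑ l, t l * (∑ j, x j * H l j)
        + ∑ l, ∑ m, t l * t m * (∑ j, H l j * H m j) := by
  have h1 : ∀ j, (x j - ∑ l, t l * H l j) ^ 2
      = (x j) ^ 2 - 2 * (∑ l, x j * (t l * H l j))
        + ∑ l, ∑ m, (t l * H l j) * (t m * H m j) := by
    intro j
    have e : (∑ l, t l * H l j) * (∑ m, t m * H m j)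
        = ∑ l, ∑ m, (t l * H l j) * (t m * H m j) := Finset.sum_mul_sum _ _ _ _
    have e2 : x j * ∑ l, t l * H l j = ∑ l, x j * (t l * H l j) := Finset.mul_sum _ _ _
    calc (x j - ∑ l, t l * H l j) ^ 2
        = (x j) ^ 2 - 2 * (∑ l, x j * (t l * H l j))
          + (∑ l, t l * H l j) * (∑ m, t m * H m j) := by rw [← e2]; ring
      _ = _ := by rw [e]
  simp only [h1]
  rw [Finset.sum_add_distrib, Finset.sum_sub_distrib]
  congr 1
  · congr 1
    rw [← Finset.mul_sum, Finset.sum_comm]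
    congr 1
    refine Finset.sum_congr rfl fun l _ => ?_
    rw [Finset.mul_sum]
    refine Finset.sum_congr rfl fun j _ => by ring
  · rw [Finset.sum_comm]
    refine Finset.sum_congr rfl fun l _ => ?_
    rw [Finset.sum_comm]
    refine Finset.sum_congr rfl fun m _ => ?_
    rw [Finset.mul_sum]
    refine Finset.sum_congr rfl fun j _ => by ring

/-- Per-row monotonicity of the objective under the multiplicative update. -/
lemma nmf_row {N K : ℕ} (x : Fin N → ℝ) (H : Fin K → Fin N → ℝ)
    (s s' : Fin K → ℝ) (hs : ∀ l, 0 < s l)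
    (hA : ∀ l m, 0 ≤ ∑ j, H l j * H m j)
    (hpos : ∀ l, 0 < ∑ m, (∑ j, H l j * H m j) * s m)
    (hs' : ∀ l, s' l = s l * (∑ j, x j * H l j) / (∑ m, (∑ j, H l j * H m j) * s m)) :
    ∑ j, (x j - ∑ l, s' l * H l j) ^ 2 ≤ ∑ j, (x j - ∑ l, s l * H l j) ^ 2 := by
  set A : Fin K → Fin K → ℝ := fun l m => ∑ j, H l j * H m j with hAdef
  set b : Fin K → ℝ := fun l => ∑ j, x j * H l j with hbdef
  have hsym : ∀ l m, A l m = A m l := by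
    intro l m
    exact Finset.sum_congr rfl fun j _ => mul_comm _ _
  set d : Fin K → ℝ := fun l => s' l - s l with hddef
  set g : Fin K → ℝ := fun l => (∑ m, A l m * s m) - b l with hgdef
  have hd : ∀ l, d l = -(s l / (∑ m, A l m * s m)) * g l := by
    intro l
    have hne : (∑ m, A l m * s m) ≠ 0 := (hpos l).ne'
    simp only [hddef, hgdef, hs' l, hbdef]
    simp only [hAdef] at hne ⊢
    field_simp
    ring
  have hs'eq : ∀ l, s' l = s l + d l := fun l => by simp [hddef]
  -- difference of objectives
  rw [nmf_expand x H s', nmf_expand x H s, ← sub_nonneg]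
  have hdiff : (∑ j, (x j) ^ 2 - 2 * ∑ l, s l * b l + ∑ l, ∑ m, s l * s m * A l m)
      - (∑ j, (x j) ^ 2 - 2 * ∑ l, s' l * b l + ∑ l, ∑ m, s' l * s' m * A l m)
      = -(2 * ∑ l, d l * g l + ∑ l, ∑ m, d l * d m * A l m) := by
    have e1 : ∑ l, ∑ m, s' l * s' m * A l m
        = ∑ l, ∑ m, s l * s m * A l m + 2 * ∑ l, ∑ m, d l * s m * A l m
          + ∑ l, ∑ m, d l * d m * A l m := by
      have : ∀ l m, s' l * s' m * A l m
          = s l * s m * A l m + (d l * s m * A l m + s l * d m * A l m)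
            + d l * d m * A l m := by
        intro l m; rw [hs'eq l, hs'eq m]; ring
      simp only [this, Finset.sum_add_distrib]
      have hsw : ∑ l, ∑ m, s l * d m * A l m = ∑ l, ∑ m, d l * s m * A l m := by
        rw [Finset.sum_comm]
        refine Finset.sum_congr rfl fun l _ => Finset.sum_congr rfl fun m _ => ?_
        rw [hsym m l]; ring
      rw [hsw]; ring
    have e2 : ∑ l, s' l * b l = ∑ l, s l * b l + ∑ l, d l * b l := by
      rw [← Finset.sum_add_distrib]
      refine Finset.sum_congr rfl fun l _ => ?_
      rw [hs'eq l]; ring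
    have e3 : ∑ l, d l * g l
        = ∑ l, ∑ m, d l * s m * A l m - ∑ l, d l * b l := by
      rw [← Finset.sum_sub_distrib]
      refine Finset.sum_congr rfl fun l _ => ?_
      simp only [hgdef]
      rw [mul_sub, Finset.mul_sum]
      congr 1
      refine Finset.sum_congr rfl fun m _ => by ring
    rw [e1, e2, e3]; ring
  rw [hdiff, neg_nonneg]
  -- bound the quadratic term by the diagonal majorant
  have hkey := nmf_key A (fun l m => hA l m) hsym s d hs
  have hterm : ∑ l, ((∑ m, A l m * s m) / s l * (d l) ^ 2 + 2 * (d l * g l)) ≤ 0 := by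
    refine Finset.sum_nonpos fun l _ => ?_
    have hne : (∑ m, A l m * s m) ≠ 0 := (hpos l).ne'
    have hsl : s l ≠ 0 := (hs l).ne'
    have : (∑ m, A l m * s m) / s l * (d l) ^ 2 + 2 * (d l * g l)
        = -(s l / (∑ m, A l m * s m)) * (g l) ^ 2 := by
      rw [hd l]
      field_simp
      ring
    rw [this]
    have h1 : 0 ≤ s l / (∑ m, A l m * s m) := le_of_lt (div_pos (hs l) (hpos l))
    nlinarith [sq_nonneg (g l)]
  have hsplit : ∑ l, ((∑ m, A l m * s m) / s l * (d l) ^ 2 + 2 * (d l * g l))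
      = ∑ l, (∑ m, A l m * s m) / s l * (d l) ^ 2 + 2 * ∑ l, d l * g l := by
    rw [Finset.sum_add_distrib, Finset.mul_sum]
  rw [hsplit] at hterm
  linarith

theorem nmf_S_update_monotone {M N K : ℕ}
    (X : Matrix (Fin M) (Fin N) ℝ) (hX : ∀ i j, 0 ≤ X i j)
    (H : Matrix (Fin K) (Fin N) ℝ) (hH : ∀ l j, 0 < H l j)
    (S : Matrix (Fin M) (Fin K) ℝ) (hS : ∀ i l, 0 < S i l)
    (S' : Matrix (Fin M) (Fin K) ℝ)
    (hS' : ∀ i l, S' i l = S i l * (X * Hᵀ) i l / (S * H * Hᵀ) i l) :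
    ∑ i, ∑ j, (X i j - (S' * H) i j) ^ 2 ≤ ∑ i, ∑ j, (X i j - (S * H) i j) ^ 2 := by
  rcases Nat.eq_zero_or_pos N with hN | hN
  · subst hN
    simp
  refine Finset.sum_le_sum fun i _ => ?_
  have hmulS : ∀ j, (S * H) i j = ∑ l, S i l * H l j := fun j => by
    simp [Matrix.mul_apply]
  have hmulS' : ∀ j, (S' * H) i j = ∑ l, S' i l * H l j := fun j => by
    simp [Matrix.mul_apply]
  have hXH : ∀ l, (X * Hᵀ) i l = ∑ j, X i j * H l j := fun l => by
    simp [Matrix.mul_apply, Matrix.transpose_apply]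
  have hSHH : ∀ l, (S * H * Hᵀ) i l = ∑ m, (∑ j, H l j * H m j) * S i m := by
    intro l
    rw [Matrix.mul_apply]
    simp only [Matrix.transpose_apply, Matrix.mul_apply]
    calc ∑ j, (∑ m, S i m * H m j) * H l j
        = ∑ j, ∑ m, S i m * H m j * H l j := by
          refine Finset.sum_congr rfl fun j _ => by rw [Finset.sum_mul]
      _ = ∑ m, ∑ j, S i m * H m j * H l j := Finset.sum_comm
      _ = ∑ m, (∑ j, H l j * H m j) * S i m := by
          refine Finset.sum_congr rfl fun m _ => ?_
          rw [Finset.sum_mul]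
          exact Finset.sum_congr rfl fun j _ => by ring
  simp only [hmulS, hmulS']
  refine nmf_row (fun j => X i j) (fun l j => H l j) (fun l => S i l) (fun l => S' i l)
    (fun l => hS i l) (fun l m => Finset.sum_nonneg fun j _ =>
      mul_nonneg (hH l j).le (hH m j).le) ?_ ?_
  · intro l
    refine Finset.sum_pos (fun m _ => mul_pos ?_ (hS i m)) ⟨l, Finset.mem_univ l⟩
    exact Finset.sum_pos (fun j _ => mul_pos (hH l j) (hH m j))
      ⟨⟨0, hN⟩, Finset.mem_univ _⟩
  · intro l
    show S' i l = S i l * (∑ j, X i j * H l j) / ∑ m, (∑ j, H l j * H m j) * S i m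
    rw [← hXH l, ← hSHH l, hS' i l]
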